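/- arXiv:2107.10082 — 6 statements merged into one kernel-verified Lean document; each statement's English description precedes it below -/
import Mathlib

section
/- There exists a constant C > 0 such that for all t > 0, ∫_{π}^{∞} ∫_{ℝ²} exp(−t(ξ²+η²)/(ξ²+η²+ζ²)²) (ξ²+η²+ζ²)^{−3} dξ dη dζ ≤ C (max{1, t})^{−1}. -/
open MeasureTheory Real


lemma integrable_inv_sq_add {c : ℝ} (hc : 0 < c) :
    Integrable fun x : ℝ => (x ^ 2 + c ^ 2)⁻¹ := by
  have h : (fun x : ℝ => (x ^ 2 + c ^ 2)⁻¹)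
      = fun x : ℝ => (c ^ 2)⁻¹ * ((fun y : ℝ => (1 + y ^ 2)⁻¹) (x / c)) := by
    funext x
    have h1 : (0:ℝ) < x ^ 2 + c ^ 2 := by positivity
    have h2 : (0:ℝ) < 1 + (x / c) ^ 2 := by positivity
    field_simp
    ring
  rw [h]
  exact (integrable_inv_one_add_sq.comp_div hc.ne').const_mul _

lemma integral_inv_sq_add {c : ℝ} (hc : 0 < c) :
    ∫ x : ℝ, (x ^ 2 + c ^ 2)⁻¹ = π / c := by
  have h : (fun x : ℝ => (x ^ 2 + c ^ 2)⁻¹)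
      = fun x : ℝ => (c ^ 2)⁻¹ * ((fun y : ℝ => (1 + y ^ 2)⁻¹) (x / c)) := by
    funext x
    have h1 : (0:ℝ) < x ^ 2 + c ^ 2 := by positivity
    have h2 : (0:ℝ) < 1 + (x / c) ^ 2 := by positivity
    field_simp
    ring
  rw [h, MeasureTheory.integral_const_mul,
    MeasureTheory.Measure.integral_comp_div (fun y : ℝ => (1 + y ^ 2)⁻¹) c,
    integral_univ_inv_one_add_sq, smul_eq_mul, abs_of_pos hc]
  field_simp

lemma integrableOn_inv_sq_Ici : IntegrableOn (fun ζ : ℝ => (ζ ^ 2)⁻¹) (Set.Ici π) := by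
  rw [integrableOn_Ici_iff_integrableOn_Ioi]
  refine (integrableOn_Ioi_rpow_of_lt (by norm_num : (-2:ℝ) < -1) pi_pos).congr_fun
    (fun x hx => ?_) measurableSet_Ioi
  have hx0 : (0:ℝ) < x := pi_pos.trans hx
  show x ^ (-2:ℝ) = (x ^ 2)⁻¹
  rw [rpow_neg hx0.le, rpow_two]

lemma integral_inv_sq_Ici : ∫ ζ in Set.Ici (π:ℝ), (ζ ^ 2)⁻¹ = π⁻¹ := by
  rw [MeasureTheory.integral_Ici_eq_integral_Ioi]
  rw [setIntegral_congr_fun measurableSet_Ioi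
    (show Set.EqOn (fun ζ : ℝ => (ζ ^ 2)⁻¹) (fun ζ : ℝ => ζ ^ (-2:ℝ)) (Set.Ioi π) by
      intro x hx
      have hx0 : (0:ℝ) < x := pi_pos.trans hx
      simp only
      rw [rpow_neg hx0.le, rpow_two])]
  rw [integral_Ioi_rpow_of_lt (by norm_num : (-2:ℝ) < -1) pi_pos]
  norm_num [rpow_neg_one]


lemma ptwise_big {t ζ ξ η : ℝ} (ht : 0 < t) (hζ : π ≤ ζ) :
    Real.exp (-t * (ξ ^ 2 + η ^ 2) / (ξ ^ 2 + η ^ 2 + ζ ^ 2) ^ 2) / (ξ ^ 2 + η ^ 2 + ζ ^ 2) ^ 3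
      ≤ Real.exp (-(t / (4 * ζ ^ 4)) * ξ ^ 2) * (ζ ^ 6)⁻¹ * Real.exp (-(t / (4 * ζ ^ 4)) * η ^ 2)
        + 4 / t * (ξ ^ 2 + ζ ^ 2)⁻¹ * (η ^ 2 + ζ ^ 2)⁻¹ := by
  have hζ0 : 0 < ζ := pi_pos.trans_le hζ
  have hD : 0 < ξ ^ 2 + η ^ 2 + ζ ^ 2 := by positivity
  rcases le_or_gt (ξ ^ 2 + η ^ 2) (ζ ^ 2) with h | h
  · have h1 : Real.exp (-t * (ξ ^ 2 + η ^ 2) / (ξ ^ 2 + η ^ 2 + ζ ^ 2) ^ 2)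
        ≤ Real.exp (-(t / (4 * ζ ^ 4)) * ξ ^ 2) * Real.exp (-(t / (4 * ζ ^ 4)) * η ^ 2) := by
      rw [← Real.exp_add]
      apply Real.exp_le_exp.2
      have he : -(t / (4 * ζ ^ 4)) * ξ ^ 2 + -(t / (4 * ζ ^ 4)) * η ^ 2
          = -(t * (ξ ^ 2 + η ^ 2) / (4 * ζ ^ 4)) := by ring
      have he2 : -t * (ξ ^ 2 + η ^ 2) / (ξ ^ 2 + η ^ 2 + ζ ^ 2) ^ 2
          = -(t * (ξ ^ 2 + η ^ 2) / (ξ ^ 2 + η ^ 2 + ζ ^ 2) ^ 2) := by ring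
      rw [he, he2, neg_le_neg_iff]
      apply div_le_div_of_nonneg_left (by positivity) (by positivity)
      nlinarith [sq_nonneg ζ, sq_nonneg ξ, sq_nonneg η]
    have h2 : ζ ^ 6 ≤ (ξ ^ 2 + η ^ 2 + ζ ^ 2) ^ 3 := by
      nlinarith [sq_nonneg ξ, sq_nonneg η, sq_nonneg ζ, sq_nonneg (ξ * η), sq_nonneg (ξ * ζ),
        sq_nonneg (η * ζ), sq_nonneg (ξ ^ 2 + η ^ 2)]
    have h3 : Real.exp (-t * (ξ ^ 2 + η ^ 2) / (ξ ^ 2 + η ^ 2 + ζ ^ 2) ^ 2)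
          / (ξ ^ 2 + η ^ 2 + ζ ^ 2) ^ 3
        ≤ (Real.exp (-(t / (4 * ζ ^ 4)) * ξ ^ 2) * Real.exp (-(t / (4 * ζ ^ 4)) * η ^ 2))
          / ζ ^ 6 := by
      apply div_le_div₀ (by positivity) h1 (by positivity) h2
    calc _ ≤ (Real.exp (-(t / (4 * ζ ^ 4)) * ξ ^ 2) * Real.exp (-(t / (4 * ζ ^ 4)) * η ^ 2))
          / ζ ^ 6 := h3
      _ = Real.exp (-(t / (4 * ζ ^ 4)) * ξ ^ 2) * (ζ ^ 6)⁻¹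
          * Real.exp (-(t / (4 * ζ ^ 4)) * η ^ 2) := by ring
      _ ≤ _ := le_add_of_nonneg_right (by positivity)
  · have hr : 0 < ξ ^ 2 + η ^ 2 := lt_of_le_of_lt (by positivity) h
    set x := t * (ξ ^ 2 + η ^ 2) / (ξ ^ 2 + η ^ 2 + ζ ^ 2) ^ 2 with hxdef
    have hx : 0 < x := by positivity
    have hexp : Real.exp (-t * (ξ ^ 2 + η ^ 2) / (ξ ^ 2 + η ^ 2 + ζ ^ 2) ^ 2) ≤ x⁻¹ := by
      have he2 : -t * (ξ ^ 2 + η ^ 2) / (ξ ^ 2 + η ^ 2 + ζ ^ 2) ^ 2 = -x := by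
        rw [hxdef]; ring
      rw [he2, Real.exp_neg]
      exact inv_anti₀ hx (by linarith [Real.add_one_le_exp x])
    have hstep : Real.exp (-t * (ξ ^ 2 + η ^ 2) / (ξ ^ 2 + η ^ 2 + ζ ^ 2) ^ 2)
          / (ξ ^ 2 + η ^ 2 + ζ ^ 2) ^ 3 ≤ x⁻¹ / (ξ ^ 2 + η ^ 2 + ζ ^ 2) ^ 3 := by
      gcongr
    refine hstep.trans (le_add_of_nonneg_of_le (by positivity) ?_)
    have hxinv : x⁻¹ = (ξ ^ 2 + η ^ 2 + ζ ^ 2) ^ 2 / (t * (ξ ^ 2 + η ^ 2)) := by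
      rw [hxdef, inv_div]
    rw [hxinv, div_div, div_le_iff₀ (by positivity)]
    have hab : (ξ ^ 2 + ζ ^ 2) * (η ^ 2 + ζ ^ 2) ≤ (ξ ^ 2 + η ^ 2 + ζ ^ 2) ^ 2 := by
      nlinarith [sq_nonneg ξ, sq_nonneg η, sq_nonneg (ξ * η)]
    have h4 : 4 / t * (ξ ^ 2 + ζ ^ 2)⁻¹ * (η ^ 2 + ζ ^ 2)⁻¹
        = 4 / (t * ((ξ ^ 2 + ζ ^ 2) * (η ^ 2 + ζ ^ 2))) := by
      field_simp
    rw [h4, div_mul_eq_mul_div, le_div_iff₀ (by positivity)]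
    -- goal: (ξ²+η²+ζ²)^2 * (t * ((ξ²+ζ²)*(η²+ζ²))) ≤ 4 * (t*(ξ²+η²) * (ξ²+η²+ζ²)^3)
    have hD2r : ξ ^ 2 + η ^ 2 + ζ ^ 2 ≤ 2 * (ξ ^ 2 + η ^ 2) := by nlinarith
    nlinarith [mul_le_mul_of_nonneg_left hab (le_of_lt (mul_pos ht (pow_pos hD 2))),
      mul_le_mul_of_nonneg_left hD2r (le_of_lt (mul_pos ht (pow_pos hD 3)))]

lemma ptwise_small {t ζ ξ η : ℝ} (ht : 0 < t) (hζ : π ≤ ζ) :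
    Real.exp (-t * (ξ ^ 2 + η ^ 2) / (ξ ^ 2 + η ^ 2 + ζ ^ 2) ^ 2) / (ξ ^ 2 + η ^ 2 + ζ ^ 2) ^ 3
      ≤ (ζ ^ 2)⁻¹ * (ξ ^ 2 + ζ ^ 2)⁻¹ * (η ^ 2 + ζ ^ 2)⁻¹ := by
  have hζ0 : 0 < ζ := pi_pos.trans_le hζ
  have hD : 0 < ξ ^ 2 + η ^ 2 + ζ ^ 2 := by positivity
  have hexp : Real.exp (-t * (ξ ^ 2 + η ^ 2) / (ξ ^ 2 + η ^ 2 + ζ ^ 2) ^ 2) ≤ 1 := by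
    apply Real.exp_le_one_iff.2  -- check name
    apply div_nonpos_of_nonpos_of_nonneg (by nlinarith) (by positivity)
  have hprod : ζ ^ 2 * (ξ ^ 2 + ζ ^ 2) * (η ^ 2 + ζ ^ 2) ≤ (ξ ^ 2 + η ^ 2 + ζ ^ 2) ^ 3 := by
    have h1 : ζ ^ 2 ≤ ξ ^ 2 + η ^ 2 + ζ ^ 2 := by nlinarith
    have h2 : ξ ^ 2 + ζ ^ 2 ≤ ξ ^ 2 + η ^ 2 + ζ ^ 2 := by nlinarith
    have h3 : η ^ 2 + ζ ^ 2 ≤ ξ ^ 2 + η ^ 2 + ζ ^ 2 := by nlinarith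
    calc ζ ^ 2 * (ξ ^ 2 + ζ ^ 2) * (η ^ 2 + ζ ^ 2)
        ≤ (ξ ^ 2 + η ^ 2 + ζ ^ 2) * (ξ ^ 2 + η ^ 2 + ζ ^ 2) * (ξ ^ 2 + η ^ 2 + ζ ^ 2) := by
          apply mul_le_mul (mul_le_mul h1 h2 (by positivity) (by positivity)) h3 (by positivity)
            (by positivity)
      _ = (ξ ^ 2 + η ^ 2 + ζ ^ 2) ^ 3 := by ring
  calc Real.exp (-t * (ξ ^ 2 + η ^ 2) / (ξ ^ 2 + η ^ 2 + ζ ^ 2) ^ 2)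
        / (ξ ^ 2 + η ^ 2 + ζ ^ 2) ^ 3
      ≤ 1 / (ζ ^ 2 * (ξ ^ 2 + ζ ^ 2) * (η ^ 2 + ζ ^ 2)) :=
        div_le_div₀ (by norm_num) hexp (by positivity) hprod
    _ = (ζ ^ 2)⁻¹ * (ξ ^ 2 + ζ ^ 2)⁻¹ * (η ^ 2 + ζ ^ 2)⁻¹ := by
        rw [one_div, mul_inv, mul_inv]

lemma chain_big {t : ℝ} (ht : 0 < t) :
    (∫ ζ in Set.Ici (π : ℝ), ∫ ξ : ℝ, ∫ η : ℝ,
        Real.exp (-t * (ξ ^ 2 + η ^ 2) / (ξ ^ 2 + η ^ 2 + ζ ^ 2) ^ 2)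
          / (ξ ^ 2 + η ^ 2 + ζ ^ 2) ^ 3) ≤ (4 + 4 * π) / t := by
  have hmain : ∀ ζ : ℝ, π ≤ ζ →
      (∫ ξ : ℝ, ∫ η : ℝ,
        Real.exp (-t * (ξ ^ 2 + η ^ 2) / (ξ ^ 2 + η ^ 2 + ζ ^ 2) ^ 2)
          / (ξ ^ 2 + η ^ 2 + ζ ^ 2) ^ 3) ≤ (4 * π + 4 * π ^ 2) / t * (ζ ^ 2)⁻¹ := by
    intro ζ hζ
    have hζ0 : 0 < ζ := pi_pos.trans_le hζ
    have hb : 0 < t / (4 * ζ ^ 4) := by positivity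
    set b := t / (4 * ζ ^ 4) with hbdef
    -- η-step
    have hη : ∀ ξ : ℝ,
        (∫ η : ℝ, Real.exp (-t * (ξ ^ 2 + η ^ 2) / (ξ ^ 2 + η ^ 2 + ζ ^ 2) ^ 2)
            / (ξ ^ 2 + η ^ 2 + ζ ^ 2) ^ 3)
        ≤ Real.exp (-b * ξ ^ 2) * (ζ ^ 6)⁻¹ * √(π / b)
            + 4 / t * (ξ ^ 2 + ζ ^ 2)⁻¹ * (π / ζ) := by
      intro ξ
      have hi1 : Integrable (fun η : ℝ =>
          Real.exp (-b * ξ ^ 2) * (ζ ^ 6)⁻¹ * Real.exp (-b * η ^ 2)) :=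
        (integrable_exp_neg_mul_sq hb).const_mul _
      have hi2 : Integrable (fun η : ℝ => 4 / t * (ξ ^ 2 + ζ ^ 2)⁻¹ * (η ^ 2 + ζ ^ 2)⁻¹) :=
        (integrable_inv_sq_add hζ0).const_mul _
      calc (∫ η : ℝ, Real.exp (-t * (ξ ^ 2 + η ^ 2) / (ξ ^ 2 + η ^ 2 + ζ ^ 2) ^ 2)
              / (ξ ^ 2 + η ^ 2 + ζ ^ 2) ^ 3)
          ≤ ∫ η : ℝ, (Real.exp (-b * ξ ^ 2) * (ζ ^ 6)⁻¹ * Real.exp (-b * η ^ 2)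
              + 4 / t * (ξ ^ 2 + ζ ^ 2)⁻¹ * (η ^ 2 + ζ ^ 2)⁻¹) :=
            integral_mono_of_nonneg
              (Filter.Eventually.of_forall fun η => by positivity)
              (hi1.add hi2)
              (Filter.Eventually.of_forall fun η => ptwise_big ht hζ)
        _ = Real.exp (-b * ξ ^ 2) * (ζ ^ 6)⁻¹ * √(π / b)
              + 4 / t * (ξ ^ 2 + ζ ^ 2)⁻¹ * (π / ζ) := by
            rw [integral_add hi1 hi2, MeasureTheory.integral_const_mul,
              MeasureTheory.integral_const_mul, integral_gaussian,
              integral_inv_sq_add hζ0]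
    -- ξ-step
    have hξ : (∫ ξ : ℝ, ∫ η : ℝ,
          Real.exp (-t * (ξ ^ 2 + η ^ 2) / (ξ ^ 2 + η ^ 2 + ζ ^ 2) ^ 2)
            / (ξ ^ 2 + η ^ 2 + ζ ^ 2) ^ 3)
        ≤ (ζ ^ 6)⁻¹ * √(π / b) * √(π / b) + (4 / t * (π / ζ)) * (π / ζ) := by
      have hi1 : Integrable (fun ξ : ℝ =>
          (ζ ^ 6)⁻¹ * √(π / b) * Real.exp (-b * ξ ^ 2)) :=
        (integrable_exp_neg_mul_sq hb).const_mul _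
      have hi2 : Integrable (fun ξ : ℝ => (4 / t * (π / ζ)) * (ξ ^ 2 + ζ ^ 2)⁻¹) :=
        (integrable_inv_sq_add hζ0).const_mul _
      calc (∫ ξ : ℝ, ∫ η : ℝ,
            Real.exp (-t * (ξ ^ 2 + η ^ 2) / (ξ ^ 2 + η ^ 2 + ζ ^ 2) ^ 2)
              / (ξ ^ 2 + η ^ 2 + ζ ^ 2) ^ 3)
          ≤ ∫ ξ : ℝ, ((ζ ^ 6)⁻¹ * √(π / b) * Real.exp (-b * ξ ^ 2)
              + (4 / t * (π / ζ)) * (ξ ^ 2 + ζ ^ 2)⁻¹) :=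
            integral_mono_of_nonneg
              (Filter.Eventually.of_forall fun ξ =>
                integral_nonneg fun η => by positivity)
              (hi1.add hi2)
              (Filter.Eventually.of_forall fun ξ => (hη ξ).trans (le_of_eq (by ring)))
        _ = (ζ ^ 6)⁻¹ * √(π / b) * √(π / b) + (4 / t * (π / ζ)) * (π / ζ) := by
            rw [integral_add hi1 hi2, MeasureTheory.integral_const_mul,
              MeasureTheory.integral_const_mul, integral_gaussian,
              integral_inv_sq_add hζ0]
    refine hξ.trans (le_of_eq ?_)
    rw [mul_assoc ((ζ ^ 6)⁻¹), Real.mul_self_sqrt (by positivity)]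
    rw [hbdef]
    field_simp
  calc (∫ ζ in Set.Ici (π : ℝ), ∫ ξ : ℝ, ∫ η : ℝ,
        Real.exp (-t * (ξ ^ 2 + η ^ 2) / (ξ ^ 2 + η ^ 2 + ζ ^ 2) ^ 2)
          / (ξ ^ 2 + η ^ 2 + ζ ^ 2) ^ 3)
      ≤ ∫ ζ in Set.Ici (π : ℝ), (4 * π + 4 * π ^ 2) / t * (ζ ^ 2)⁻¹ :=
        integral_mono_of_nonneg
          (Filter.Eventually.of_forall fun ζ =>
            integral_nonneg fun ξ => integral_nonneg fun η => by positivity)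
          (integrableOn_inv_sq_Ici.const_mul _)
          ((ae_restrict_mem measurableSet_Ici).mono fun ζ hζ => hmain ζ hζ)
    _ = (4 * π + 4 * π ^ 2) / t * π⁻¹ := by
        rw [MeasureTheory.integral_const_mul, integral_inv_sq_Ici]
    _ = (4 + 4 * π) / t := by
        field_simp

lemma chain_small {t : ℝ} (ht : 0 < t) :
    (∫ ζ in Set.Ici (π : ℝ), ∫ ξ : ℝ, ∫ η : ℝ,
        Real.exp (-t * (ξ ^ 2 + η ^ 2) / (ξ ^ 2 + η ^ 2 + ζ ^ 2) ^ 2)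
          / (ξ ^ 2 + η ^ 2 + ζ ^ 2) ^ 3) ≤ 1 := by
  have hmain : ∀ ζ : ℝ, π ≤ ζ →
      (∫ ξ : ℝ, ∫ η : ℝ,
        Real.exp (-t * (ξ ^ 2 + η ^ 2) / (ξ ^ 2 + η ^ 2 + ζ ^ 2) ^ 2)
          / (ξ ^ 2 + η ^ 2 + ζ ^ 2) ^ 3) ≤ (ζ ^ 2)⁻¹ := by
    intro ζ hζ
    have hζ0 : 0 < ζ := pi_pos.trans_le hζ
    have hη : ∀ ξ : ℝ,
        (∫ η : ℝ, Real.exp (-t * (ξ ^ 2 + η ^ 2) / (ξ ^ 2 + η ^ 2 + ζ ^ 2) ^ 2)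
            / (ξ ^ 2 + η ^ 2 + ζ ^ 2) ^ 3)
        ≤ (ζ ^ 2)⁻¹ * (ξ ^ 2 + ζ ^ 2)⁻¹ * (π / ζ) := by
      intro ξ
      have hi : Integrable (fun η : ℝ => (ζ ^ 2)⁻¹ * (ξ ^ 2 + ζ ^ 2)⁻¹ * (η ^ 2 + ζ ^ 2)⁻¹) :=
        (integrable_inv_sq_add hζ0).const_mul _
      calc (∫ η : ℝ, Real.exp (-t * (ξ ^ 2 + η ^ 2) / (ξ ^ 2 + η ^ 2 + ζ ^ 2) ^ 2)
              / (ξ ^ 2 + η ^ 2 + ζ ^ 2) ^ 3)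
          ≤ ∫ η : ℝ, (ζ ^ 2)⁻¹ * (ξ ^ 2 + ζ ^ 2)⁻¹ * (η ^ 2 + ζ ^ 2)⁻¹ :=
            integral_mono_of_nonneg
              (Filter.Eventually.of_forall fun η => by positivity) hi
              (Filter.Eventually.of_forall fun η => ptwise_small ht hζ)
        _ = (ζ ^ 2)⁻¹ * (ξ ^ 2 + ζ ^ 2)⁻¹ * (π / ζ) := by
            rw [MeasureTheory.integral_const_mul, integral_inv_sq_add hζ0]
    have hξ : (∫ ξ : ℝ, ∫ η : ℝ,
          Real.exp (-t * (ξ ^ 2 + η ^ 2) / (ξ ^ 2 + η ^ 2 + ζ ^ 2) ^ 2)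
            / (ξ ^ 2 + η ^ 2 + ζ ^ 2) ^ 3)
        ≤ ((ζ ^ 2)⁻¹ * (π / ζ)) * (π / ζ) := by
      have hi : Integrable (fun ξ : ℝ => ((ζ ^ 2)⁻¹ * (π / ζ)) * (ξ ^ 2 + ζ ^ 2)⁻¹) :=
        (integrable_inv_sq_add hζ0).const_mul _
      calc (∫ ξ : ℝ, ∫ η : ℝ,
            Real.exp (-t * (ξ ^ 2 + η ^ 2) / (ξ ^ 2 + η ^ 2 + ζ ^ 2) ^ 2)
              / (ξ ^ 2 + η ^ 2 + ζ ^ 2) ^ 3)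
          ≤ ∫ ξ : ℝ, ((ζ ^ 2)⁻¹ * (π / ζ)) * (ξ ^ 2 + ζ ^ 2)⁻¹ :=
            integral_mono_of_nonneg
              (Filter.Eventually.of_forall fun ξ =>
                integral_nonneg fun η => by positivity) hi
              (Filter.Eventually.of_forall fun ξ => (hη ξ).trans (le_of_eq (by ring)))
        _ = ((ζ ^ 2)⁻¹ * (π / ζ)) * (π / ζ) := by
            rw [MeasureTheory.integral_const_mul, integral_inv_sq_add hζ0]
    refine hξ.trans ?_
    have hπζ : π / ζ ≤ 1 := div_le_one_of_le₀ hζ hζ0.le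
    have hπζ0 : 0 ≤ π / ζ := by positivity
    calc ((ζ ^ 2)⁻¹ * (π / ζ)) * (π / ζ) ≤ ((ζ ^ 2)⁻¹ * 1) * 1 := by gcongr <;> positivity
      _ = (ζ ^ 2)⁻¹ := by ring
  calc (∫ ζ in Set.Ici (π : ℝ), ∫ ξ : ℝ, ∫ η : ℝ,
        Real.exp (-t * (ξ ^ 2 + η ^ 2) / (ξ ^ 2 + η ^ 2 + ζ ^ 2) ^ 2)
          / (ξ ^ 2 + η ^ 2 + ζ ^ 2) ^ 3)
      ≤ ∫ ζ in Set.Ici (π : ℝ), (ζ ^ 2)⁻¹ :=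
        integral_mono_of_nonneg
          (Filter.Eventually.of_forall fun ζ =>
            integral_nonneg fun ξ => integral_nonneg fun η => by positivity)
          integrableOn_inv_sq_Ici
          ((ae_restrict_mem measurableSet_Ici).mono fun ζ hζ => hmain ζ hζ)
    _ = π⁻¹ := integral_inv_sq_Ici
    _ ≤ 1 := by
        rw [inv_le_one_iff₀]
        right
        linarith [Real.pi_gt_three]


/-- Key frequency-space integral estimate: there is C > 0 such that for all t > 0,
∫_{π}^{∞} ∫_{ℝ²} exp(−t(ξ²+η²)/(ξ²+η²+ζ²)²) (ξ²+η²+ζ²)^{−3} dξ dη dζ ≤ C ⟨t⟩⁻¹. -/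
theorem stmt_2 :
    ∃ C : ℝ, 0 < C ∧ ∀ t : ℝ, 0 < t →
      (∫ ζ in Set.Ici (π : ℝ), ∫ ξ : ℝ, ∫ η : ℝ,
          Real.exp (-t * (ξ ^ 2 + η ^ 2) / (ξ ^ 2 + η ^ 2 + ζ ^ 2) ^ 2)
            / (ξ ^ 2 + η ^ 2 + ζ ^ 2) ^ 3) ≤ C * (max 1 t)⁻¹ := by
  refine ⟨4 + 4 * π + 1, by positivity, fun t ht => ?_⟩
  rcases le_total 1 t with h1 | h1
  · calc _ ≤ (4 + 4 * π) / t := chain_big ht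
      _ ≤ (4 + 4 * π + 1) * (max 1 t)⁻¹ := by
          rw [max_eq_right h1, div_eq_mul_inv]
          exact mul_le_mul_of_nonneg_right (by linarith [Real.pi_pos])
            (inv_nonneg.2 ht.le)
  · calc _ ≤ (1:ℝ) := chain_small ht
      _ ≤ (4 + 4 * π + 1) * (max 1 t)⁻¹ := by
          rw [max_eq_left h1, inv_one, mul_one]
          linarith [Real.pi_pos]
end

section
/- There exists a constant C > 0 such that for all t > 0, ∫_{π}^{∞} ∫_0^{2π} ∫_{3π/4}^{π} exp(−t sin²β / r²) r^{−4} sin β dβ dψ dr ≤ C t^{−1}. -/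
open MeasureTheory Real

lemma gauss_aux {a : ℝ} (ha : 0 < a) (L : ℝ) :
    ∫ s in (0:ℝ)..L, s * Real.exp (-a * s^2) ≤ 1/(2*a) := by
  have key : ∀ s : ℝ, HasDerivAt (fun u : ℝ => -Real.exp (-a * u^2)/(2*a))
      (s * Real.exp (-a * s^2)) s := by
    intro s
    have h1 : HasDerivAt (fun u : ℝ => -a * u^2) (-a * (2*s)) s := by
      simpa using ((hasDerivAt_pow 2 s).const_mul (-a))
    have h3 := (h1.exp.neg).div_const (2*a)
    refine h3.congr_deriv ?_
    rw [div_eq_iff (by positivity)]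
    ring
  have hint : IntervalIntegrable (fun s : ℝ => s * Real.exp (-a * s^2)) volume 0 L := by
    apply Continuous.intervalIntegrable
    continuity
  rw [intervalIntegral.integral_eq_sub_of_hasDerivAt (fun s _ => key s) hint]
  have h1 : 0 < Real.exp (-a * L^2) := Real.exp_pos _
  have h2 : Real.exp (-a * (0:ℝ)^2) = 1 := by norm_num
  rw [h2]
  have h3 : 0 < 2*a := by linarith
  have h4 : 0 ≤ Real.exp (-a * L^2) / (2*a) := by positivity
  have heq : -Real.exp (-a * L ^ 2) / (2 * a) - -1/(2*a) = (1 - Real.exp (-a * L ^ 2))/(2*a) := by ring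
  rw [heq]
  gcongr
  linarith

lemma beta_bound {t r : ℝ} (ht : 0 < t) (hr : π ≤ r) :
    (∫ β in Set.Icc (3*π/4) π, Real.exp (-t * Real.sin β ^ 2 / r ^ 2) / r ^ 4 * Real.sin β)
      ≤ π^2 / (8 * t * r^2) := by
  have hπ : (0:ℝ) < π := pi_pos
  have hr0 : 0 < r := lt_of_lt_of_le hπ hr
  set a : ℝ := 4*t/(π^2*r^2) with ha_def
  have ha : 0 < a := by positivity
  set g : ℝ → ℝ := fun β => (π - β) * Real.exp (-a * (π - β)^2) / r^4 with hg_def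
  have hle : (3*π/4 : ℝ) ≤ π := by linarith
  -- pointwise bound
  have hfg : ∀ β ∈ Set.Icc (3*π/4 : ℝ) π,
      Real.exp (-t * Real.sin β ^ 2 / r ^ 2) / r ^ 4 * Real.sin β ≤ g β := by
    intro β hβ
    obtain ⟨hβ1, hβ2⟩ := hβ
    have hs0 : 0 ≤ π - β := by linarith
    have hs2 : π - β ≤ π/2 := by linarith
    have hsin_eq : Real.sin β = Real.sin (π - β) := by
      rw [Real.sin_pi_sub]
    have hsin_le : Real.sin β ≤ π - β := by
      rw [hsin_eq]; exact Real.sin_le hs0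
    have hsin_ge : 2/π * (π - β) ≤ Real.sin β := by
      rw [hsin_eq]; exact Real.mul_le_sin hs0 hs2
    have hsin_nonneg : 0 ≤ Real.sin β := le_trans (by positivity) hsin_ge
    have h1 : (2/π*(π-β))^2 ≤ Real.sin β^2 := by
      apply pow_le_pow_left₀ (by positivity) hsin_ge
    have hexp : Real.exp (-t * Real.sin β ^ 2 / r ^ 2) ≤ Real.exp (-a * (π - β)^2) := by
      apply Real.exp_le_exp.2
      have heq : -a * (π-β)^2 = -t * ((2/π*(π-β))^2) / r^2 := by
        rw [ha_def]; field_simp; ring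
      rw [heq, div_le_div_iff_of_pos_right (by positivity : (0:ℝ) < r^2)]
      nlinarith
    calc Real.exp (-t * Real.sin β ^ 2 / r ^ 2) / r ^ 4 * Real.sin β
        ≤ Real.exp (-a * (π - β)^2) / r ^ 4 * (π - β) := by
          apply mul_le_mul _ hsin_le hsin_nonneg (by positivity)
          gcongr
      _ = g β := by rw [hg_def]; ring
  have hf_cont : Continuous (fun β : ℝ => Real.exp (-t * Real.sin β ^ 2 / r ^ 2) / r ^ 4 * Real.sin β) := by
    fun_prop
  have hg_cont : Continuous g := by rw [hg_def]; fun_prop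
  have step1 : (∫ β in Set.Icc (3*π/4) π, Real.exp (-t * Real.sin β ^ 2 / r ^ 2) / r ^ 4 * Real.sin β)
      ≤ ∫ β in Set.Icc (3*π/4) π, g β :=
    setIntegral_mono_on hf_cont.integrableOn_Icc hg_cont.integrableOn_Icc measurableSet_Icc hfg
  have step2 : (∫ β in Set.Icc (3*π/4 : ℝ) π, g β) = ∫ β in (3*π/4 : ℝ)..π, g β := by
    rw [intervalIntegral.integral_of_le hle, integral_Icc_eq_integral_Ioc]
  have step3 : (∫ β in (3*π/4:ℝ)..π, g β)
      = ∫ s in (0:ℝ)..(π/4), s * Real.exp (-a * s^2) / r^4 := by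
    have h := intervalIntegral.integral_comp_sub_left
      (a := 3*π/4) (b := π) (fun s : ℝ => s * Real.exp (-a * s^2) / r^4) π
    rw [show π - π = (0:ℝ) by ring, show π - 3*π/4 = π/4 by ring] at h
    rw [← h]
  have step4 : (∫ s in (0:ℝ)..(π/4), s * Real.exp (-a * s^2) / r^4)
      = (∫ s in (0:ℝ)..(π/4), s * Real.exp (-a * s^2)) / r^4 :=
    intervalIntegral.integral_div _ _
  have step5 := gauss_aux ha (π/4)
  have final : (1/(2*a)) / r^4 = π^2 / (8 * t * r^2) := by
    rw [ha_def]; field_simp; ring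
  calc (∫ β in Set.Icc (3*π/4) π, Real.exp (-t * Real.sin β ^ 2 / r ^ 2) / r ^ 4 * Real.sin β)
      ≤ ∫ β in Set.Icc (3*π/4) π, g β := step1
    _ = (∫ s in (0:ℝ)..(π/4), s * Real.exp (-a * s^2)) / r^4 := by rw [step2, step3, step4]
    _ ≤ (1/(2*a)) / r^4 := by gcongr
    _ = π^2 / (8 * t * r^2) := final

/-- Spherical-coordinates estimate on the angular range β ∈ [3π/4, π]:
∫_{π}^{∞} ∫_0^{2π} ∫_{3π/4}^{π} exp(−t sin²β / r²) r^{−4} sin β dβ dψ dr ≤ C t^{−1} for all t > 0. -/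
theorem stmt_4 :
    ∃ C : ℝ, 0 < C ∧ ∀ t : ℝ, 0 < t →
      (∫ r in Set.Ici (π : ℝ), ∫ ψ in Set.Icc (0:ℝ) (2 * π), ∫ β in Set.Icc (3*π/4) π,
          Real.exp (-t * Real.sin β ^ 2 / r ^ 2) / r ^ 4 * Real.sin β) ≤ C * t⁻¹ := by
  have hπ : (0:ℝ) < π := pi_pos
  refine ⟨π^2/4, by positivity, ?_⟩
  intro t ht
  set F : ℝ → ℝ := fun r => ∫ ψ in Set.Icc (0:ℝ) (2 * π), ∫ β in Set.Icc (3*π/4) π,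
      Real.exp (-t * Real.sin β ^ 2 / r ^ 2) / r ^ 4 * Real.sin β with hF_def
  set G : ℝ → ℝ := fun r => (π^3/(4*t)) * r ^ (-2:ℝ) with hG_def
  -- pointwise bound F ≤ G on Ici π
  have hFG : ∀ r ∈ Set.Ici (π:ℝ), F r ≤ G r := by
    intro r hr
    have hr' : π ≤ r := hr
    have hr0 : 0 < r := lt_of_lt_of_le hπ hr'
    have hψ : F r = (2*π) * ∫ β in Set.Icc (3*π/4) π,
        Real.exp (-t * Real.sin β ^ 2 / r ^ 2) / r ^ 4 * Real.sin β := by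
      simp only [hF_def]
      rw [MeasureTheory.setIntegral_const]
      rw [measureReal_def, Real.volume_Icc]
      rw [ENNReal.toReal_ofReal (by linarith : (0:ℝ) ≤ 2*π - 0)]
      rw [smul_eq_mul]
      norm_num
    rw [hψ]; simp only [hG_def]
    have hb := beta_bound ht hr'
    have hrp : r ^ (-2:ℝ) = (r^2)⁻¹ := by
      rw [Real.rpow_neg hr0.le, ← Real.rpow_natCast r 2]
      norm_num
    rw [hrp]
    calc (2*π) * ∫ β in Set.Icc (3*π/4) π,
          Real.exp (-t * Real.sin β ^ 2 / r ^ 2) / r ^ 4 * Real.sin β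
        ≤ (2*π) * (π^2 / (8 * t * r^2)) := by
          apply mul_le_mul_of_nonneg_left hb (by positivity)
      _ = π^3/(4*t) * (r^2)⁻¹ := by field_simp; ring
  -- nonnegativity of F on Ici π
  have hF_nonneg : ∀ r ∈ Set.Ici (π:ℝ), 0 ≤ F r := by
    intro r hr
    have hr0 : 0 < r := lt_of_lt_of_le hπ hr
    apply setIntegral_nonneg measurableSet_Icc
    intro ψ _
    apply setIntegral_nonneg measurableSet_Icc
    intro β hβ
    have hβ0 : (0:ℝ) ≤ β := le_trans (by positivity) hβ.1
    have hsin : 0 ≤ Real.sin β := Real.sin_nonneg_of_nonneg_of_le_pi hβ0 hβ.2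
    positivity
  -- integrability of G on Ici π
  have hG_int : IntegrableOn G (Set.Ici (π:ℝ)) := by
    rw [hG_def, integrableOn_Ici_iff_integrableOn_Ioi]
    exact (integrableOn_Ioi_rpow_of_lt (by norm_num) hπ).const_mul _
  -- compare integrals
  have hmono : (∫ r in Set.Ici (π:ℝ), F r) ≤ ∫ r in Set.Ici (π:ℝ), G r := by
    apply integral_mono_of_nonneg
    · filter_upwards [ae_restrict_mem measurableSet_Ici] with r hr using hF_nonneg r hr
    · exact hG_int
    · filter_upwards [ae_restrict_mem measurableSet_Ici] with r hr using hFG r hr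
  -- compute ∫ G
  have hG_val : (∫ r in Set.Ici (π:ℝ), G r) = π^2/4 * t⁻¹ := by
    rw [hG_def, MeasureTheory.integral_Ici_eq_integral_Ioi, MeasureTheory.integral_const_mul,
      integral_Ioi_rpow_of_lt (by norm_num) hπ]
    rw [show (-2:ℝ) + 1 = -1 by norm_num, Real.rpow_neg_one]
    field_simp
  calc (∫ r in Set.Ici (π:ℝ), F r) ≤ ∫ r in Set.Ici (π:ℝ), G r := hmono
    _ = π^2/4 * t⁻¹ := hG_val
end

section
/- For all real ξ, η and all integers k ≥ 1, setting ρ = ξ² + η² + π²k² and σ = √(ρ² − 4(ξ²+η²)/ρ), and λ₊ = (−ρ + σ)/2, one has −2(ξ²+η²)/ρ² ≤ λ₊ ≤ −(ξ²+η²)/ρ². -/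
open Real

/-- Bounds for the slowly decaying root λ₊ of the dispersion relation:
with ρ = ξ²+η²+π²k², σ = √(ρ² − 4(ξ²+η²)/ρ), λ₊ = (−ρ+σ)/2, one has
−2(ξ²+η²)/ρ² ≤ λ₊ ≤ −(ξ²+η²)/ρ² for k ≥ 1. -/
theorem stmt_5 (ξ η : ℝ) (k : ℕ) (hk : 1 ≤ k)
    (ρ σ lamP : ℝ)
    (hρ : ρ = ξ ^ 2 + η ^ 2 + π ^ 2 * (k : ℝ) ^ 2)
    (hσ : σ = Real.sqrt (ρ ^ 2 - 4 * (ξ ^ 2 + η ^ 2) / ρ))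
    (hlamP : lamP = (-ρ + σ) / 2) :
    -2 * (ξ ^ 2 + η ^ 2) / ρ ^ 2 ≤ lamP ∧ lamP ≤ -((ξ ^ 2 + η ^ 2) / ρ ^ 2) := by
  set A : ℝ := ξ ^ 2 + η ^ 2 with hAdef
  have hA : 0 ≤ A := by positivity
  have hπ : (3 : ℝ) < π := pi_gt_three
  have hk1 : (1 : ℝ) ≤ (k : ℝ) := by exact_mod_cast hk
  have hρ9 : A + 9 ≤ ρ := by
    have h1 : (9:ℝ) ≤ π ^ 2 := by nlinarith
    have h2 : (1:ℝ) ≤ (k:ℝ) ^ 2 := by nlinarith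
    rw [hρ]; nlinarith
  have hρpos : (0 : ℝ) < ρ := by linarith
  have h4A : 4 * A ≤ ρ ^ 3 := by nlinarith
  have hnn : 0 ≤ ρ ^ 2 - 4 * A / ρ := by
    rw [sub_nonneg, div_le_iff₀ hρpos]
    nlinarith
  have hσ2 : σ ^ 2 = ρ ^ 2 - 4 * A / ρ := by
    rw [hσ, sq_sqrt hnn]
  have hσnn : 0 ≤ σ := hσ ▸ Real.sqrt_nonneg _
  -- upper bound: σ ≤ ρ - 2A/ρ²
  have ht : 0 ≤ ρ - 2 * A / ρ ^ 2 := by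
    rw [sub_nonneg, div_le_iff₀ (by positivity : (0:ℝ) < ρ ^ 2)]
    nlinarith
  have hexp : (ρ - 2 * A / ρ ^ 2) ^ 2 = ρ ^ 2 - 4 * A / ρ + 4 * A ^ 2 / ρ ^ 4 := by
    field_simp; ring
  have hup : σ ≤ ρ - 2 * A / ρ ^ 2 := by
    have h1 : ρ ^ 2 - 4 * A / ρ ≤ (ρ - 2 * A / ρ ^ 2) ^ 2 := by
      rw [hexp]
      have : 0 ≤ 4 * A ^ 2 / ρ ^ 4 := by positivity
      linarith
    calc σ = Real.sqrt (ρ ^ 2 - 4 * A / ρ) := hσ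
      _ ≤ Real.sqrt ((ρ - 2 * A / ρ ^ 2) ^ 2) := Real.sqrt_le_sqrt h1
      _ = ρ - 2 * A / ρ ^ 2 := Real.sqrt_sq ht
  -- lower bound: σ ≥ ρ - 4A/ρ²
  have hlo : ρ - 4 * A / ρ ^ 2 ≤ σ := by
    rcases le_or_gt (ρ - 4 * A / ρ ^ 2) 0 with h | h
    · linarith
    · have h2 : (ρ - 4 * A / ρ ^ 2) ^ 2 ≤ ρ ^ 2 - 4 * A / ρ := by
        have hexp2 : (ρ - 4 * A / ρ ^ 2) ^ 2 = ρ ^ 2 - 8 * A / ρ + 16 * A ^ 2 / ρ ^ 4 := by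
          field_simp; ring
        rw [hexp2]
        have key : 16 * A ^ 2 / ρ ^ 4 ≤ 4 * A / ρ := by
          rw [div_le_div_iff₀ (by positivity) hρpos]
          nlinarith [mul_nonneg (mul_nonneg hA hρpos.le) (sub_nonneg.mpr h4A)]
        have h3 : 8 * A / ρ = 4 * A / ρ + 4 * A / ρ := by ring
        linarith
      calc ρ - 4 * A / ρ ^ 2 = Real.sqrt ((ρ - 4 * A / ρ ^ 2) ^ 2) :=
            (Real.sqrt_sq h.le).symm
        _ ≤ Real.sqrt (ρ ^ 2 - 4 * A / ρ) := Real.sqrt_le_sqrt h2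
        _ = σ := hσ.symm
  constructor
  · rw [hlamP]
    have : -2 * A / ρ ^ 2 = (-ρ + (ρ - 4 * A / ρ ^ 2)) / 2 := by ring
    rw [this]
    linarith
  · rw [hlamP]
    have : -(A / ρ ^ 2) = (-ρ + (ρ - 2 * A / ρ ^ 2)) / 2 := by ring
    rw [this]
    linarith
end

section
/- For all real ξ, η, all integers k ≥ 1, and all t ≥ 0: with ρ = ξ²+η²+π²k², σ = √(ρ² − 4(ξ²+η²)/ρ), λ₊ = (−ρ+σ)/2, λ₋ = (−ρ−σ)/2, there is a constant C independent of ξ, η, k, t such that (1/2)(e^{λ₊ t} + e^{λ₋ t}) ≤ C exp(−t(ξ²+η²)/ρ²). -/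
open Real

/-- Symbol bound for the semigroup operator L₁(t): there is C independent of ξ, η, k, t with
(1/2)(e^{λ₊t} + e^{λ₋t}) ≤ C exp(−t(ξ²+η²)/ρ²) for all k ≥ 1, t ≥ 0. -/
theorem stmt_8 :
    ∃ C : ℝ, 0 < C ∧ ∀ (ξ η : ℝ) (k : ℕ) (t : ℝ), 1 ≤ k → 0 ≤ t →
      ∀ ρ σ lamP lamM : ℝ,
        ρ = ξ ^ 2 + η ^ 2 + π ^ 2 * (k : ℝ) ^ 2 →
        σ = Real.sqrt (ρ ^ 2 - 4 * (ξ ^ 2 + η ^ 2) / ρ) →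
        lamP = (-ρ + σ) / 2 → lamM = (-ρ - σ) / 2 →
        (Real.exp (lamP * t) + Real.exp (lamM * t)) / 2
          ≤ C * Real.exp (-t * (ξ ^ 2 + η ^ 2) / ρ ^ 2) := by
  refine ⟨1, one_pos, ?_⟩
  intro ξ η k t hk ht ρ σ lamP lamM hρ hσ hP hM
  set q : ℝ := ξ ^ 2 + η ^ 2 with hq
  have hq0 : 0 ≤ q := by positivity
  have hk1 : (1 : ℝ) ≤ (k : ℝ) := by exact_mod_cast hk
  have hπ : (3 : ℝ) ≤ π := by
    nlinarith [Real.pi_gt_three]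
  have hk2 : (1 : ℝ) ≤ (k : ℝ) ^ 2 := by nlinarith
  have hρπ : π ^ 2 ≤ ρ := by nlinarith [sq_nonneg π]
  have hρpos : 0 < ρ := by nlinarith
  have hqρ : q ≤ ρ := by nlinarith [sq_nonneg π]
  have hσ0 : 0 ≤ σ := hσ ▸ Real.sqrt_nonneg _
  -- key bound: σ ≤ ρ - 2q/ρ²
  have hbig : 0 ≤ ρ - 2 * q / ρ ^ 2 := by
    rw [sub_nonneg, div_le_iff₀ (by positivity)]
    nlinarith [mul_le_mul_of_nonneg_left hρπ hρpos.le, sq_nonneg (π - 3)]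
  have hkey : σ ≤ ρ - 2 * q / ρ ^ 2 := by
    rw [hσ]
    have h1 : ρ ^ 2 - 4 * q / ρ ≤ (ρ - 2 * q / ρ ^ 2) ^ 2 := by
      have h2 : (ρ - 2 * q / ρ ^ 2) ^ 2 = ρ ^ 2 - 4 * q / ρ + 4 * q ^ 2 / ρ ^ 4 := by
        field_simp
        ring
      rw [h2]
      have : 0 ≤ 4 * q ^ 2 / ρ ^ 4 := by positivity
      linarith
    calc Real.sqrt (ρ ^ 2 - 4 * q / ρ) ≤ Real.sqrt ((ρ - 2 * q / ρ ^ 2) ^ 2) :=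
          Real.sqrt_le_sqrt h1
      _ = ρ - 2 * q / ρ ^ 2 := Real.sqrt_sq hbig
  have hlamP : lamP ≤ -q / ρ ^ 2 := by
    have e : ρ - 2 * q / ρ ^ 2 = ρ + 2 * (-q / ρ ^ 2) := by ring
    rw [hP]
    linarith [hkey, e.le]
  have h1 : Real.exp (lamP * t) ≤ Real.exp (-t * q / ρ ^ 2) := by
    apply Real.exp_le_exp.mpr
    have : lamP * t ≤ (-q / ρ ^ 2) * t := mul_le_mul_of_nonneg_right hlamP ht
    calc lamP * t ≤ (-q / ρ ^ 2) * t := this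
      _ = -t * q / ρ ^ 2 := by ring
  have h2 : Real.exp (lamM * t) ≤ Real.exp (-t * q / ρ ^ 2) := by
    apply Real.exp_le_exp.mpr
    have hM' : lamM ≤ lamP := by rw [hP, hM]; linarith
    have : lamM * t ≤ lamP * t := mul_le_mul_of_nonneg_right hM' ht
    have h3 : lamP * t ≤ -t * q / ρ ^ 2 := by
      calc lamP * t ≤ (-q / ρ ^ 2) * t := mul_le_mul_of_nonneg_right hlamP ht
        _ = -t * q / ρ ^ 2 := by ring
    linarith
  rw [one_mul]
  linarith
end

section
/- For all real ξ, η, all integers k ≥ 1, and all t ≥ 0: with ρ = ξ²+η²+π²k², σ = √(ρ² − 4(ξ²+η²)/ρ), λ± = (−ρ±σ)/2, there is a constant C independent of ξ, η, k, t such that |(λ₊ e^{λ₊ t} + λ₋ e^{λ₋ t})/2| ≤ C [ ((ξ²+η²)/ρ²) exp(−t(ξ²+η²)/ρ²) + ρ e^{−ρ t/2} ]. -/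
open Real

set_option maxHeartbeats 1000000 in
/-- Symbol bound for ∂_t L₁(t): there is C independent of ξ, η, k, t with
|(λ₊e^{λ₊t} + λ₋e^{λ₋t})/2| ≤ C [((ξ²+η²)/ρ²) exp(−t(ξ²+η²)/ρ²) + ρ e^{−ρt/2}] for k ≥ 1, t ≥ 0. -/
theorem stmt_9 :
    ∃ C : ℝ, 0 < C ∧ ∀ (ξ η : ℝ) (k : ℕ) (t : ℝ), 1 ≤ k → 0 ≤ t →
      ∀ ρ σ lamP lamM : ℝ,
        ρ = ξ ^ 2 + η ^ 2 + π ^ 2 * (k : ℝ) ^ 2 →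
        σ = Real.sqrt (ρ ^ 2 - 4 * (ξ ^ 2 + η ^ 2) / ρ) →
        lamP = (-ρ + σ) / 2 → lamM = (-ρ - σ) / 2 →
        |(lamP * Real.exp (lamP * t) + lamM * Real.exp (lamM * t)) / 2|
          ≤ C * ((ξ ^ 2 + η ^ 2) / ρ ^ 2 * Real.exp (-t * (ξ ^ 2 + η ^ 2) / ρ ^ 2)
                + ρ * Real.exp (-ρ * t / 2)) := by
  refine ⟨1, one_pos, ?_⟩
  intro ξ η k t hk ht ρ σ lamP lamM hρ hσ hP hM
  obtain ⟨q, hq⟩ : ∃ q : ℝ, q = ξ ^ 2 + η ^ 2 := ⟨_, rfl⟩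
  rw [← hq] at hρ hσ ⊢
  have hq0 : 0 ≤ q := by rw [hq]; positivity
  have hπ : (3:ℝ) ≤ π := by linarith [Real.pi_gt_three]
  have hk1 : (1:ℝ) ≤ (k:ℝ) := by exact_mod_cast hk
  have hρπ : π ^ 2 ≤ ρ := by
    have hk2 : (1:ℝ) ≤ (k:ℝ) ^ 2 := by nlinarith
    rw [hρ]
    nlinarith [sq_nonneg ξ, sq_nonneg η, mul_nonneg (sq_nonneg π) (by linarith : (0:ℝ) ≤ (k:ℝ)^2 - 1)]
  have hρ4 : (4:ℝ) ≤ ρ := by nlinarith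
  have hρ0 : (0:ℝ) < ρ := by linarith
  have hρ2 : (0:ℝ) < ρ ^ 2 := by positivity
  have hqρ : q ≤ ρ := by rw [hρ]; nlinarith
  have hsq_nonneg : 0 ≤ ρ ^ 2 - 4 * q / ρ := by
    have h1 : 4 * q / ρ ≤ ρ ^ 2 := by
      rw [div_le_iff₀ hρ0]; nlinarith
    linarith
  have hσ0 : 0 ≤ σ := hσ ▸ Real.sqrt_nonneg _
  have hσsq : σ ^ 2 = ρ ^ 2 - 4 * q / ρ := by rw [hσ]; exact Real.sq_sqrt hsq_nonneg
  have hdq : 0 ≤ 4 * q / ρ := by positivity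
  have hσρ : σ ≤ ρ := by nlinarith
  have hρσ0 : (0:ℝ) < ρ + σ := by linarith
  clear hσ hρ hq
  have hσsq' : σ ^ 2 * ρ = ρ ^ 2 * ρ - 4 * q := by
    rw [hσsq]; field_simp
  have hP_val : lamP = (-2 * q) / (ρ * (ρ + σ)) := by
    rw [eq_div_iff (by positivity), hP]
    linear_combination hσsq' / 2
  have hP_le : lamP ≤ -q / ρ ^ 2 := by
    rw [hP_val, div_le_div_iff₀ (by positivity) hρ2]
    nlinarith [mul_nonneg (mul_nonneg hq0 hρ0.le) (sub_nonneg.mpr hσρ)]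
  have hP_ge : -2 * q / ρ ^ 2 ≤ lamP := by
    rw [hP_val, div_le_div_iff₀ hρ2 (by positivity)]
    nlinarith [mul_nonneg (mul_nonneg hq0 hρ0.le) hσ0]
  have h0q : 0 ≤ q / ρ ^ 2 := by positivity
  have hP_neg : lamP ≤ 0 := by
    have := hP_le; rw [neg_div] at this; linarith
  have hP_ge' : -(2 * q / ρ ^ 2) ≤ lamP := by
    rw [show -(2 * q / ρ ^ 2) = -2 * q / ρ ^ 2 by ring]; exact hP_ge
  have hM_le : lamM ≤ -ρ / 2 := by rw [hM]; linarith
  have hM_ge : -ρ ≤ lamM := by rw [hM]; linarith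
  have hEP : Real.exp (lamP * t) ≤ Real.exp (-t * q / ρ ^ 2) := by
    apply Real.exp_le_exp.mpr
    have h := mul_le_mul_of_nonneg_right hP_le ht
    calc lamP * t ≤ (-q / ρ ^ 2) * t := h
      _ = -t * q / ρ ^ 2 := by ring
  have hEM : Real.exp (lamM * t) ≤ Real.exp (-ρ * t / 2) := by
    apply Real.exp_le_exp.mpr
    have h := mul_le_mul_of_nonneg_right hM_le ht
    calc lamM * t ≤ (-ρ / 2) * t := h
      _ = -ρ * t / 2 := by ring
  have h1 : |lamP * Real.exp (lamP * t)| ≤ 2 * (q / ρ ^ 2) * Real.exp (-t * q / ρ ^ 2) := by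
    rw [abs_mul, Real.abs_exp]
    apply mul_le_mul _ hEP (Real.exp_pos _).le (by positivity)
    rw [abs_of_nonpos hP_neg]
    calc -lamP ≤ 2 * q / ρ ^ 2 := by linarith [hP_ge']
      _ = 2 * (q / ρ ^ 2) := by ring
  have h2 : |lamM * Real.exp (lamM * t)| ≤ ρ * Real.exp (-ρ * t / 2) := by
    rw [abs_mul, Real.abs_exp]
    apply mul_le_mul _ hEM (Real.exp_pos _).le hρ0.le
    rw [abs_of_nonpos (by linarith : lamM ≤ 0)]
    linarith
  have habs : |(lamP * Real.exp (lamP * t) + lamM * Real.exp (lamM * t)) / 2|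
      ≤ (|lamP * Real.exp (lamP * t)| + |lamM * Real.exp (lamM * t)|) / 2 := by
    rw [abs_div, abs_two]
    linarith [abs_add_le (lamP * Real.exp (lamP * t)) (lamM * Real.exp (lamM * t))]
  have hE2 : 0 ≤ ρ * Real.exp (-ρ * t / 2) := by positivity
  rw [one_mul]
  calc |(lamP * Real.exp (lamP * t) + lamM * Real.exp (lamM * t)) / 2|
      ≤ (|lamP * Real.exp (lamP * t)| + |lamM * Real.exp (lamM * t)|) / 2 := habs
    _ ≤ (2 * (q / ρ ^ 2) * Real.exp (-t * q / ρ ^ 2) + ρ * Real.exp (-ρ * t / 2)) / 2 := by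
        linarith
    _ ≤ q / ρ ^ 2 * Real.exp (-t * q / ρ ^ 2) + ρ * Real.exp (-ρ * t / 2) := by
        linarith
end

section
/- Let g: ℝ²×ℕ₊ → ℂ be a function with ‖(ξ²+η²+π²k²)³ g(ξ,η,k)‖_{L^∞} < ∞. Define G(ξ,η,k,t) = exp(−t(ξ²+η²)/(ξ²+η²+π²k²)²) g(ξ,η,k). Then there is a constant C with Σ_{k≥1} ∫_{ℝ²} |G(ξ,η,k,t)| dξ dη ≤ C ⟨t⟩^{−1} ‖(ξ²+η²+π²k²)³ g‖_{L^∞} for all t > 0, where ⟨t⟩ = max{1,t}. -/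
open MeasureTheory Real

lemma aux_integrable_inv (a : ℝ) (ha : 0 < a) :
    Integrable (fun x : ℝ => (x ^ 2 + a ^ 2)⁻¹) := by
  have h : (fun x : ℝ => (x ^ 2 + a ^ 2)⁻¹)
      = fun x : ℝ => (a ^ 2)⁻¹ * (1 + (x / a) ^ 2)⁻¹ := by
    funext x
    rw [← mul_inv]
    congr 1
    field_simp
    ring
  rw [h]
  exact (integrable_inv_one_add_sq.comp_div ha.ne').const_mul _

lemma aux_integral_inv (a : ℝ) (ha : 0 < a) :
    ∫ x : ℝ, (x ^ 2 + a ^ 2)⁻¹ = π / a := by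
  have h : (fun x : ℝ => (x ^ 2 + a ^ 2)⁻¹)
      = fun x : ℝ => (fun y : ℝ => (a ^ 2)⁻¹ * (1 + y ^ 2)⁻¹) (x / a) := by
    funext x
    simp only
    rw [← mul_inv]
    congr 1
    field_simp
    ring
  rw [h, MeasureTheory.Measure.integral_comp_div (fun y : ℝ => (a ^ 2)⁻¹ * (1 + y ^ 2)⁻¹) a,
    integral_const_mul, integral_univ_inv_one_add_sq, smul_eq_mul, abs_of_pos ha]
  field_simp

set_option maxHeartbeats 2000000 in
lemma key_bound (a t M : ℝ) (ha : 1 ≤ a) (ht : 0 < t) (hM : 0 ≤ M)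
    (φ : ℝ → ℝ → ℝ) (hφ0 : ∀ ξ η, 0 ≤ φ ξ η)
    (hφ : ∀ ξ η, (ξ ^ 2 + η ^ 2 + a ^ 2) ^ 3 * φ ξ η ≤ M) :
    (∫ ξ : ℝ, ∫ η : ℝ,
        Real.exp (-t * (ξ ^ 2 + η ^ 2) / (ξ ^ 2 + η ^ 2 + a ^ 2) ^ 2) * φ ξ η)
      ≤ 69 * (max 1 t)⁻¹ * M / a ^ 2 := by
  have ha0 : (0:ℝ) < a := lt_of_lt_of_le one_pos ha
  have ha' : a ≠ 0 := ha0.ne'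
  set F : ℝ → ℝ → ℝ := fun ξ η =>
    Real.exp (-t * (ξ ^ 2 + η ^ 2) / (ξ ^ 2 + η ^ 2 + a ^ 2) ^ 2) * φ ξ η with hF
  have hF0 : ∀ ξ η, 0 ≤ F ξ η := fun ξ η =>
    mul_nonneg (Real.exp_nonneg _) (hφ0 ξ η)
  have hφle : ∀ ξ η : ℝ, φ ξ η ≤ M / (ξ ^ 2 + η ^ 2 + a ^ 2) ^ 3 := by
    intro ξ η
    rw [le_div_iff₀ (by positivity)]
    calc φ ξ η * (ξ ^ 2 + η ^ 2 + a ^ 2) ^ 3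
        = (ξ ^ 2 + η ^ 2 + a ^ 2) ^ 3 * φ ξ η := by ring
      _ ≤ M := hφ ξ η
  have IB : Integrable (fun x : ℝ => (x ^ 2 + a ^ 2)⁻¹) := aux_integrable_inv a ha0
  have VB : ∫ x : ℝ, (x ^ 2 + a ^ 2)⁻¹ = π / a := aux_integral_inv a ha0
  rcases le_total t 1 with h1 | h1
  · -- case t ≤ 1
    rw [max_eq_left h1]
    have hpt : ∀ ξ η : ℝ, F ξ η ≤ (M / a ^ 2 * (ξ ^ 2 + a ^ 2)⁻¹) * (η ^ 2 + a ^ 2)⁻¹ := by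
      intro ξ η
      set D := ξ ^ 2 + η ^ 2 + a ^ 2 with hD
      have hD0 : 0 < D := by positivity
      have e1 : a ^ 2 ≤ D := by nlinarith [sq_nonneg ξ, sq_nonneg η]
      have e2 : ξ ^ 2 + a ^ 2 ≤ D := by nlinarith [sq_nonneg η]
      have e3 : η ^ 2 + a ^ 2 ≤ D := by nlinarith [sq_nonneg ξ]
      have hexp : Real.exp (-t * (ξ ^ 2 + η ^ 2) / D ^ 2) ≤ 1 := by
        rw [Real.exp_le_one_iff]
        apply div_nonpos_of_nonpos_of_nonneg
        · nlinarith [sq_nonneg ξ, sq_nonneg η]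
        · positivity
      calc F ξ η ≤ 1 * (M / D ^ 3) :=
            mul_le_mul hexp (hφle ξ η) (hφ0 ξ η) zero_le_one
        _ = M / D ^ 3 := one_mul _
        _ ≤ M / (a ^ 2 * ((ξ ^ 2 + a ^ 2) * (η ^ 2 + a ^ 2))) := by
            apply div_le_div_of_nonneg_left hM (by positivity)
            calc a ^ 2 * ((ξ ^ 2 + a ^ 2) * (η ^ 2 + a ^ 2))
                ≤ D * (D * D) :=
                  mul_le_mul e1 (mul_le_mul e2 e3 (by positivity) hD0.le)
                    (by positivity) hD0.le
              _ = D ^ 3 := by ring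
        _ = (M / a ^ 2 * (ξ ^ 2 + a ^ 2)⁻¹) * (η ^ 2 + a ^ 2)⁻¹ := by
            have h2 : ξ ^ 2 + a ^ 2 ≠ 0 := by positivity
            have h3 : η ^ 2 + a ^ 2 ≠ 0 := by positivity
            field_simp
    have inner : ∀ ξ : ℝ, (∫ η : ℝ, F ξ η) ≤ (M / a ^ 2 * (π / a)) * (ξ ^ 2 + a ^ 2)⁻¹ := by
      intro ξ
      have h := integral_mono_of_nonneg (ae_of_all _ (hF0 ξ))
        (IB.const_mul (M / a ^ 2 * (ξ ^ 2 + a ^ 2)⁻¹)) (ae_of_all _ (hpt ξ))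
      rw [integral_const_mul, VB] at h
      exact le_of_le_of_eq h (by ring)
    have outer : (∫ ξ : ℝ, ∫ η : ℝ, F ξ η) ≤ (M / a ^ 2 * (π / a)) * (π / a) := by
      have h := integral_mono_of_nonneg
        (ae_of_all _ fun ξ => integral_nonneg (hF0 ξ))
        (IB.const_mul (M / a ^ 2 * (π / a))) (ae_of_all _ inner)
      rw [integral_const_mul, VB] at h
      exact h
    refine outer.trans ?_
    have heq : M / a ^ 2 * (π / a) * (π / a) = M * π ^ 2 / a ^ 4 := by
      field_simp
    rw [heq, inv_one, mul_one, div_le_div_iff₀ (by positivity) (by positivity)]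
    have h16 : π ^ 2 ≤ 16 := by nlinarith [Real.pi_pos, Real.pi_le_four]
    have ha2 : (1:ℝ) ≤ a ^ 2 := by nlinarith
    have hq : (0:ℝ) ≤ M * a ^ 2 := by positivity
    have hq4 : M * a ^ 2 ≤ M * a ^ 4 := by nlinarith
    nlinarith [mul_le_mul_of_nonneg_right h16 hq]
  · -- case 1 ≤ t
    rw [max_eq_right h1]
    set c : ℝ := t / (9 * a ^ 4) with hc
    have hc0 : 0 < c := by positivity
    set A : ℝ → ℝ := fun x => Real.exp (-c * x ^ 2) with hA
    set B : ℝ → ℝ := fun x => (x ^ 2 + a ^ 2)⁻¹ with hB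
    have IA : Integrable A := integrable_exp_neg_mul_sq hc0
    have VA : ∫ x : ℝ, A x = Real.sqrt (π / c) := integral_gaussian c
    have hpt : ∀ ξ η : ℝ, F ξ η ≤
        (M / a ^ 6 * A ξ) * A η + (4 * M / t * B ξ) * B η := by
      intro ξ η
      set D := ξ ^ 2 + η ^ 2 + a ^ 2 with hD
      have hD0 : 0 < D := by positivity
      have e2 : ξ ^ 2 + a ^ 2 ≤ D := by nlinarith [sq_nonneg η]
      have e3 : η ^ 2 + a ^ 2 ≤ D := by nlinarith [sq_nonneg ξ]
      rcases le_total (ξ ^ 2 + η ^ 2) (a ^ 2) with hu | hu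
      · -- small frequencies: gaussian bound
        have hAA : (0:ℝ) ≤ A ξ * A η := by
          rw [hA]; positivity
        have hexp : Real.exp (-t * (ξ ^ 2 + η ^ 2) / D ^ 2) ≤ A ξ * A η := by
          have hAe : A ξ * A η = Real.exp (-(c * (ξ ^ 2 + η ^ 2))) := by
            rw [hA]
            simp only
            rw [← Real.exp_add]
            congr 1
            ring
          rw [hAe, Real.exp_le_exp]
          have h9 : D ^ 2 ≤ 9 * a ^ 4 := by nlinarith [sq_nonneg ξ, sq_nonneg η]
          have key : c * (ξ ^ 2 + η ^ 2) ≤ t * (ξ ^ 2 + η ^ 2) / D ^ 2 := by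
            have hce : c * (ξ ^ 2 + η ^ 2) = t * (ξ ^ 2 + η ^ 2) / (9 * a ^ 4) := by
              rw [hc]; ring
            rw [hce]
            exact div_le_div_of_nonneg_left (by positivity) (by positivity) h9
          have hne : -t * (ξ ^ 2 + η ^ 2) / D ^ 2 = -(t * (ξ ^ 2 + η ^ 2) / D ^ 2) := by
            ring
          rw [hne]
          exact neg_le_neg key
        have ha6 : a ^ 6 ≤ D ^ 3 := by
          calc a ^ 6 = (a ^ 2) ^ 3 := by ring
            _ ≤ D ^ 3 := by
                apply pow_le_pow_left₀ (by positivity)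
                nlinarith [sq_nonneg ξ, sq_nonneg η]
        calc F ξ η ≤ (A ξ * A η) * (M / D ^ 3) :=
              mul_le_mul hexp (hφle ξ η) (hφ0 ξ η) hAA
          _ ≤ (A ξ * A η) * (M / a ^ 6) := by
              apply mul_le_mul_of_nonneg_left _ hAA
              exact div_le_div_of_nonneg_left hM (by positivity) ha6
          _ = (M / a ^ 6 * A ξ) * A η := by ring
          _ ≤ (M / a ^ 6 * A ξ) * A η + (4 * M / t * B ξ) * B η := by
              apply le_add_of_nonneg_right
              rw [hB]
              positivity
      · -- large frequencies
        have hu0 : (0:ℝ) < ξ ^ 2 + η ^ 2 := lt_of_lt_of_le (by positivity) hu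
        have hx0 : (0:ℝ) < t * (ξ ^ 2 + η ^ 2) / D ^ 2 := by positivity
        have hexp2 : Real.exp (-t * (ξ ^ 2 + η ^ 2) / D ^ 2)
            ≤ (t * (ξ ^ 2 + η ^ 2) / D ^ 2)⁻¹ := by
          have hne : -t * (ξ ^ 2 + η ^ 2) / D ^ 2 = -(t * (ξ ^ 2 + η ^ 2) / D ^ 2) := by
            ring
          rw [hne, Real.exp_neg]
          have hle : t * (ξ ^ 2 + η ^ 2) / D ^ 2 ≤ Real.exp (t * (ξ ^ 2 + η ^ 2) / D ^ 2) :=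
            (le_add_of_nonneg_right zero_le_one).trans (Real.add_one_le_exp _)
          gcongr
        have hP : (ξ ^ 2 + a ^ 2) * (η ^ 2 + a ^ 2) ≤ 2 * ((ξ ^ 2 + η ^ 2) * D) := by
          nlinarith [mul_le_mul e2 e3 (by positivity : (0:ℝ) ≤ η ^ 2 + a ^ 2) hD0.le,
            mul_nonneg (sub_nonneg.mpr hu) hD0.le]
        calc F ξ η ≤ (t * (ξ ^ 2 + η ^ 2) / D ^ 2)⁻¹ * (M / D ^ 3) :=
              mul_le_mul hexp2 (hφle ξ η) (hφ0 ξ η) (by positivity)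
          _ = M / (t * ((ξ ^ 2 + η ^ 2) * D)) := by
              rw [hD]
              field_simp
          _ ≤ 4 * M / (t * ((ξ ^ 2 + a ^ 2) * (η ^ 2 + a ^ 2))) := by
              rw [div_le_div_iff₀ (by positivity) (by positivity)]
              nlinarith [mul_le_mul_of_nonneg_left hP (mul_nonneg hM ht.le),
                mul_nonneg (mul_nonneg hM ht.le) (mul_nonneg hu0.le hD0.le)]
          _ = (4 * M / t * B ξ) * B η := by
              rw [hB]
              simp only
              have h2 : ξ ^ 2 + a ^ 2 ≠ 0 := by positivity
              have h3 : η ^ 2 + a ^ 2 ≠ 0 := by positivity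
              field_simp
          _ ≤ (M / a ^ 6 * A ξ) * A η + (4 * M / t * B ξ) * B η := by
              apply le_add_of_nonneg_left
              rw [hA]
              positivity
    -- integrate the bound
    have hint : ∀ ξ : ℝ, Integrable (fun η : ℝ =>
        (M / a ^ 6 * A ξ) * A η + (4 * M / t * B ξ) * B η) := fun ξ =>
      (IA.const_mul _).add (IB.const_mul _)
    have inner : ∀ ξ : ℝ, (∫ η : ℝ, F ξ η)
        ≤ (M / a ^ 6 * Real.sqrt (π / c)) * A ξ + (4 * M / t * (π / a)) * B ξ := by
      intro ξ
      have h := integral_mono_of_nonneg (ae_of_all _ (hF0 ξ)) (hint ξ)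
        (ae_of_all _ (hpt ξ))
      rw [integral_add (IA.const_mul _) (IB.const_mul _), integral_const_mul,
        integral_const_mul, VA, VB] at h
      exact le_of_le_of_eq h (by ring)
    have iout : Integrable (fun ξ : ℝ =>
        (M / a ^ 6 * Real.sqrt (π / c)) * A ξ + (4 * M / t * (π / a)) * B ξ) :=
      (IA.const_mul _).add (IB.const_mul _)
    have outer : (∫ ξ : ℝ, ∫ η : ℝ, F ξ η)
        ≤ (M / a ^ 6 * Real.sqrt (π / c)) * Real.sqrt (π / c)
          + (4 * M / t * (π / a)) * (π / a) := by
      have h := integral_mono_of_nonneg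
        (ae_of_all _ fun ξ => integral_nonneg (hF0 ξ)) iout (ae_of_all _ inner)
      rw [integral_add (IA.const_mul _) (IB.const_mul _), integral_const_mul,
        integral_const_mul, VA, VB] at h
      exact h
    refine outer.trans ?_
    have hsq : Real.sqrt (π / c) * Real.sqrt (π / c) = π / c :=
      Real.mul_self_sqrt (by positivity)
    have heq1 : M / a ^ 6 * Real.sqrt (π / c) * Real.sqrt (π / c)
        = 9 * π * (M / (t * a ^ 2)) := by
      rw [mul_assoc, hsq, hc]
      first
      | (field_simp; ring)
      | field_simp
    have heq2 : 4 * M / t * (π / a) * (π / a) = 4 * π ^ 2 * (M / (t * a ^ 2)) := by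
      field_simp
    have heq3 : 69 * t⁻¹ * M / a ^ 2 = 69 * (M / (t * a ^ 2)) := by
      field_simp
    rw [heq1, heq2, heq3]
    have hQ : (0:ℝ) ≤ M / (t * a ^ 2) := by positivity
    have hπ69 : 9 * π + 4 * π ^ 2 ≤ 69 := by
      nlinarith [Real.pi_lt_d2, Real.pi_pos]
    calc 9 * π * (M / (t * a ^ 2)) + 4 * π ^ 2 * (M / (t * a ^ 2))
        = (9 * π + 4 * π ^ 2) * (M / (t * a ^ 2)) := by ring
      _ ≤ 69 * (M / (t * a ^ 2)) := mul_le_mul_of_nonneg_right hπ69 hQ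

/-- Core frequency-space decay estimate: there is a universal C > 0 such that for any
g : ℝ²×ℕ₊ → ℂ with (ξ²+η²+π²k²)³‖g(ξ,η,k)‖ ≤ M for all ξ, η, k, and any t > 0,
Σ_{k≥1} ∫_{ℝ²} exp(−t(ξ²+η²)/(ξ²+η²+π²k²)²) ‖g(ξ,η,k)‖ dξ dη ≤ C ⟨t⟩^{−1} M. -/
theorem stmt_10 :
    ∃ C : ℝ, 0 < C ∧ ∀ (g : ℝ → ℝ → ℕ+ → ℂ) (M : ℝ),
      (∀ (ξ η : ℝ) (k : ℕ+), (ξ ^ 2 + η ^ 2 + π ^ 2 * (k : ℝ) ^ 2) ^ 3 * ‖g ξ η k‖ ≤ M) →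
      ∀ t : ℝ, 0 < t →
        (∑' k : ℕ+, ∫ ξ : ℝ, ∫ η : ℝ,
            Real.exp (-t * (ξ ^ 2 + η ^ 2) / (ξ ^ 2 + η ^ 2 + π ^ 2 * (k : ℝ) ^ 2) ^ 2)
              * ‖g ξ η k‖) ≤ C * (max 1 t)⁻¹ * M := by
  have hNat : Summable (fun n : ℕ => ((n:ℝ) ^ 2)⁻¹) := by
    simpa [one_div] using Real.summable_one_div_nat_pow.mpr one_lt_two
  have hS : Summable (fun k : ℕ+ => ((k:ℝ) ^ 2)⁻¹) := by
    have h := hNat.comp_injective PNat.coe_injective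
    exact h
  set S := ∑' k : ℕ+, ((k:ℝ) ^ 2)⁻¹ with hSdef
  have hSpos : 0 < S := by
    refine Summable.tsum_pos hS (fun k => by positivity) 1 (by norm_num)
  refine ⟨69 * S, by positivity, ?_⟩
  intro g M hg t ht
  have hM : 0 ≤ M := le_trans (by positivity) (hg 0 0 1)
  have hmax : (0:ℝ) < max 1 t := lt_of_lt_of_le one_pos (le_max_left _ _)
  have hk : ∀ k : ℕ+, (∫ ξ : ℝ, ∫ η : ℝ,
      Real.exp (-t * (ξ ^ 2 + η ^ 2) / (ξ ^ 2 + η ^ 2 + π ^ 2 * (k : ℝ) ^ 2) ^ 2)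
        * ‖g ξ η k‖) ≤ 69 * (max 1 t)⁻¹ * M * (((k:ℝ) ^ 2)⁻¹) := by
    intro k
    have hk1 : (1:ℝ) ≤ (k:ℝ) := by exact_mod_cast k.one_le
    have hak : (1:ℝ) ≤ π * (k:ℝ) := by nlinarith [Real.pi_gt_three]
    have hb := key_bound (π * (k:ℝ)) t M hak ht hM (fun ξ η => ‖g ξ η k‖)
      (fun ξ η => norm_nonneg _)
      (fun ξ η => by rw [mul_pow]; exact hg ξ η k)
    simp only [mul_pow] at hb
    refine hb.trans ?_
    rw [div_eq_mul_inv]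
    have hc0 : (0:ℝ) ≤ 69 * (max 1 t)⁻¹ * M := by
      apply mul_nonneg _ hM
      positivity
    have hinv : (π ^ 2 * (k:ℝ) ^ 2)⁻¹ ≤ ((k:ℝ) ^ 2)⁻¹ := by
      apply inv_anti₀ (by positivity)
      have hpi2 : (1:ℝ) ≤ π ^ 2 := by nlinarith [Real.pi_gt_three]
      nlinarith [mul_le_mul_of_nonneg_right hpi2 (sq_nonneg ((k:ℕ):ℝ))]
    exact mul_le_mul_of_nonneg_left hinv hc0
  have hnn : ∀ k : ℕ+, 0 ≤ ∫ ξ : ℝ, ∫ η : ℝ,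
      Real.exp (-t * (ξ ^ 2 + η ^ 2) / (ξ ^ 2 + η ^ 2 + π ^ 2 * (k : ℝ) ^ 2) ^ 2)
        * ‖g ξ η k‖ := fun k =>
    integral_nonneg fun ξ => integral_nonneg fun η => by positivity
  have hsum2 : Summable (fun k : ℕ+ => 69 * (max 1 t)⁻¹ * M * (((k:ℝ) ^ 2)⁻¹)) :=
    hS.mul_left _
  have hsum1 : Summable (fun k : ℕ+ => ∫ ξ : ℝ, ∫ η : ℝ,
      Real.exp (-t * (ξ ^ 2 + η ^ 2) / (ξ ^ 2 + η ^ 2 + π ^ 2 * (k : ℝ) ^ 2) ^ 2)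
        * ‖g ξ η k‖) :=
    Summable.of_nonneg_of_le hnn hk hsum2
  calc (∑' k : ℕ+, ∫ ξ : ℝ, ∫ η : ℝ,
      Real.exp (-t * (ξ ^ 2 + η ^ 2) / (ξ ^ 2 + η ^ 2 + π ^ 2 * (k : ℝ) ^ 2) ^ 2)
        * ‖g ξ η k‖)
      ≤ ∑' k : ℕ+, 69 * (max 1 t)⁻¹ * M * (((k:ℝ) ^ 2)⁻¹) :=
        Summable.tsum_le_tsum hk hsum1 hsum2
    _ = 69 * (max 1 t)⁻¹ * M * S := tsum_mul_left
    _ = 69 * S * (max 1 t)⁻¹ * M := by ring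
end
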